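/- Let B ∈ Γ^q_u be an affine binarization polytope. Then there exists a linear binarization polytope B′ ∈ Γ^q_u and a unimodular transformation of the form g(x,z) = (x, w̄ + Dz), where w̄ ∈ {0,1}^q and D is the diagonal matrix with entries D_{jj} = 1 − 2w̄_j (so D is unimodular and g is an affine map with unimodular integral linear part and integral translation), such that B′ = g(B). -/
import Mathlib


open Set

/-- A rational polytope in `ℝ × ℝ^q`: the convex hull of finitely many rational points. -/
def IsRatPolytopeBin (q : ℕ) (B : Set (ℝ × (Fin q → ℝ))) : Prop :=
  ∃ V : Finset (ℝ × (Fin q → ℝ)),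
    (∀ p ∈ V, (∃ r : ℚ, p.1 = (r : ℝ)) ∧ ∀ j, ∃ r : ℚ, p.2 j = (r : ℝ)) ∧
    B = convexHull ℝ (V : Set (ℝ × (Fin q → ℝ)))

/-- `B ∈ Γ^q_u`: a binarization polytope. -/
def IsBinPoly (u q : ℕ) (B : Set (ℝ × (Fin q → ℝ))) : Prop :=
  IsRatPolytopeBin q B ∧
  (∀ p ∈ B, 0 ≤ p.1 ∧ p.1 ≤ (u : ℝ) ∧ ∀ j, 0 ≤ p.2 j ∧ p.2 j ≤ 1) ∧
  Prod.fst '' (B ∩ {p | ∀ j, p.2 j = 0 ∨ p.2 j = 1}) = {x : ℝ | ∃ k : ℕ, k ≤ u ∧ x = (k : ℝ)}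

/-- The affine flipping map `g(x,z) = (x, w + Dz)` with `D = diag(1-2w)`. -/
noncomputable def gAff (q : ℕ) (w : Fin q → ℝ) :
    (ℝ × (Fin q → ℝ)) →ᵃ[ℝ] (ℝ × (Fin q → ℝ)) where
  toFun p := (p.1, fun j => w j + (1 - 2 * w j) * p.2 j)
  linear :=
    { toFun := fun p => (p.1, fun j => (1 - 2 * w j) * p.2 j)
      map_add' := by intro a b; refine Prod.ext rfl ?_; funext j; simp [Prod.snd_add]; ring
      map_smul' := by intro c a; refine Prod.ext rfl ?_; funext j; simp [Prod.smul_snd]; ring }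
  map_vadd' := by
    intro p v
    refine Prod.ext rfl ?_
    funext j
    simp [Prod.snd_add, vadd_eq_add]
    ring

lemma gAff_invol (q : ℕ) (w : Fin q → ℝ) (hw : ∀ j, w j = 0 ∨ w j = 1)
    (p : ℝ × (Fin q → ℝ)) : gAff q w (gAff q w p) = p := by
  refine Prod.ext rfl ?_
  funext j
  show w j + (1 - 2 * w j) * (w j + (1 - 2 * w j) * p.2 j) = p.2 j
  rcases hw j with h | h <;> rw [h] <;> ring

theorem stmt8 (u q : ℕ) (hu : 0 < u) (hq : 0 < q)
    (B : Set (ℝ × (Fin q → ℝ))) (hB : IsBinPoly u q B)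
    (α : Fin q → ℝ) (α₀ : ℝ) (haff : ∀ p ∈ B, p.1 = (∑ j, α j * p.2 j) + α₀) :
    ∃ wbar : Fin q → ℝ, (∀ j, wbar j = 0 ∨ wbar j = 1) ∧
      ∃ B' : Set (ℝ × (Fin q → ℝ)),
        B' = (fun p : ℝ × (Fin q → ℝ) =>
          (p.1, fun j : Fin q => wbar j + (1 - 2 * wbar j) * p.2 j)) '' B ∧
        IsBinPoly u q B' ∧
        ∃ β : Fin q → ℝ, ∀ p ∈ B', p.1 = ∑ j, β j * p.2 j := by
  classical
  obtain ⟨hpoly, hbox, hproj⟩ := hB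
  have h0 : (0:ℝ) ∈ Prod.fst '' (B ∩ {p | ∀ j, p.2 j = 0 ∨ p.2 j = 1}) := by
    rw [hproj]; exact ⟨0, Nat.zero_le u, by simp⟩
  obtain ⟨p₀, ⟨hp₀B, hp₀bin⟩, hp₀x⟩ := h0
  set w : Fin q → ℝ := p₀.2 with hw_def
  have hw : ∀ j, w j = 0 ∨ w j = 1 := hp₀bin
  set g : (ℝ × (Fin q → ℝ)) → (ℝ × (Fin q → ℝ)) :=
    fun p => (p.1, fun j => w j + (1 - 2 * w j) * p.2 j) with hg_def
  have hg_eq : ∀ p, gAff q w p = g p := fun p => rfl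
  have hinv : ∀ p, g (g p) = p := by
    intro p
    have := gAff_invol q w hw p
    rwa [hg_eq, hg_eq] at this
  have hα₀ : α₀ = -∑ j, α j * w j := by
    have h1 := haff p₀ hp₀B
    rw [hp₀x] at h1
    linarith
  -- binary preservation
  have hbinpres : ∀ p : ℝ × (Fin q → ℝ), (∀ j, p.2 j = 0 ∨ p.2 j = 1) →
      ∀ j, (g p).2 j = 0 ∨ (g p).2 j = 1 := by
    intro p hp j
    show w j + (1 - 2 * w j) * p.2 j = 0 ∨ w j + (1 - 2 * w j) * p.2 j = 1
    rcases hw j with h | h <;> rcases hp j with h' | h' <;> rw [h, h'] <;> norm_num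
  -- image of binary part
  have hbinset : (g '' B) ∩ {p | ∀ j, p.2 j = 0 ∨ p.2 j = 1}
      = g '' (B ∩ {p | ∀ j, p.2 j = 0 ∨ p.2 j = 1}) := by
    ext p'
    constructor
    · rintro ⟨⟨p, hpB, rfl⟩, hbin⟩
      exact ⟨p, ⟨hpB, by have := hbinpres _ hbin; rwa [hinv] at this⟩, rfl⟩
    · rintro ⟨p, ⟨hpB, hbin⟩, rfl⟩
      exact ⟨⟨p, hpB, rfl⟩, hbinpres p hbin⟩
  refine ⟨w, hw, g '' B, rfl, ⟨?_, ?_, ?_⟩, ?_⟩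
  · -- rational polytope
    obtain ⟨V, hVrat, hVhull⟩ := hpoly
    refine ⟨V.image g, ?_, ?_⟩
    · intro p' hp'
      obtain ⟨p, hpV, rfl⟩ := Finset.mem_image.mp hp'
      obtain ⟨hx, hz⟩ := hVrat p hpV
      refine ⟨hx, fun j => ?_⟩
      obtain ⟨r, hr⟩ := hz j
      show ∃ s : ℚ, w j + (1 - 2 * w j) * p.2 j = (s : ℝ)
      rcases hw j with h | h
      · exact ⟨r, by rw [h, hr]; ring⟩
      · exact ⟨1 - r, by rw [h, hr]; push_cast; ring⟩
    · rw [hVhull, Finset.coe_image]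
      exact (gAff q w).image_convexHull _
  · -- box
    rintro p' ⟨p, hpB, rfl⟩
    obtain ⟨h1, h2, h3⟩ := hbox p hpB
    refine ⟨h1, h2, fun j => ?_⟩
    show 0 ≤ w j + (1 - 2 * w j) * p.2 j ∧ w j + (1 - 2 * w j) * p.2 j ≤ 1
    obtain ⟨hz0, hz1⟩ := h3 j
    rcases hw j with h | h <;> rw [h] <;> constructor <;> nlinarith
  · -- projection
    rw [hbinset, ← hproj, Set.image_image]
  · -- linearity
    refine ⟨fun j => (1 - 2 * w j) * α j, ?_⟩
    rintro p' ⟨p, hpB, rfl⟩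
    show p.1 = ∑ j, (1 - 2 * w j) * α j * (w j + (1 - 2 * w j) * p.2 j)
    have haffp := haff p hpB
    rw [haffp, hα₀]
    rw [← sub_eq_add_neg, ← Finset.sum_sub_distrib]
    apply Finset.sum_congr rfl
    intro j _
    rcases hw j with h | h <;> rw [h] <;> ring
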